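/- Let q ≥ 3 be a prime power and t, k, n integers with 0 < 2t < k and n ≥ k + t + 1. Let δ ∈ F_{q^n} with δ ≠ 0, F(X) = X + δX^{q^{2t}}, and let G(X) = X^{q^{2t}} + ∑_{i=2t+1}^{k−1} c_i X^{q^i} + C X^{q^k} with c_i ∈ F_{q^n} and C ≠ 0. Then there exists λ ∈ F_{q^n} ∖ F_q such that F(λ) ≠ 0, G(λ) ≠ 0, and L_ξ(λ) := (ξ − ξ^{q^t})^{q^{k+t}} (ξ^{q^{k−t}} − ξ)^{q^t} F(λ)^{q^t+1} + δ (ξ^{q^k} − ξ)^{q^t(q^t+1)} λ^{q^t(q^t+1)} ≠ 0 for every ξ in the algebraic closure of F_q with ξ^{q^{k−2t}} = ξ and ξ^{q^{k−t}} ≠ ξ. (For each such ξ, L_ξ is a nonzero polynomial in λ of degree q^{3t} + q^{2t}, so the union of its root sets over the at most q^{k−2t} relevant ξ has size at most q^{k+t} + q^k < q^n.) -/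

import Mathlib

noncomputable section

/-- `F(x) = x + δ x^(q^(2t))` (value at `x`). -/
def Fval (q t : ℕ) {Ω : Type*} [Field Ω] (δ x : Ω) : Ω := x + δ * x ^ q ^ (2 * t)

/-- `G(x) = x^(q^(2t)) + ∑_{i=2t+1}^{k-1} c_i x^(q^i) + C x^(q^k)` (value at `x`). -/
def Gval (q t k : ℕ) {Ω : Type*} [Field Ω] (c : ℕ → Ω) (Cc x : Ω) : Ω :=
  x ^ q ^ (2 * t) + (∑ i ∈ Finset.Ico (2 * t + 1) k, c i * x ^ q ^ i) + Cc * x ^ q ^ k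

open Polynomial

/-- `X^N - X` has natDegree `N` when `1 < N`. -/
lemma aux_natDegree_XpowN_sub_X {Ω : Type*} [Field Ω] {N : ℕ} (hN : 1 < N) :
    (X ^ N - X : Polynomial Ω).natDegree = N := by
  rw [sub_eq_add_neg, Polynomial.natDegree_add_eq_left_of_natDegree_lt] <;>
    simp [Polynomial.natDegree_X_pow, hN]

lemma aux_XpowN_sub_X_ne_zero {Ω : Type*} [Field Ω] {N : ℕ} (hN : 1 < N) :
    (X ^ N - X : Polynomial Ω) ≠ 0 := by
  intro h
  have h2 := aux_natDegree_XpowN_sub_X (Ω := Ω) hN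
  rw [h] at h2
  simp at h2
  omega

/-- membership in the root set of `X^N - X`. -/
lemma aux_mem_rootset {Ω : Type*} [Field Ω] [DecidableEq Ω] {N : ℕ} (hN : 1 < N) (x : Ω) :
    x ∈ (X ^ N - X : Polynomial Ω).roots.toFinset ↔ x ^ N = x := by
  rw [Multiset.mem_toFinset, Polynomial.mem_roots (aux_XpowN_sub_X_ne_zero hN)]
  simp [Polynomial.IsRoot, sub_eq_zero]

lemma aux_card_rootset {Ω : Type*} [Field Ω] [DecidableEq Ω] [IsAlgClosed Ω] (p : ℕ) [Fact p.Prime]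
    [CharP Ω p] {N : ℕ} (hN : 1 < N) (h : p ∣ N) :
    ((X ^ N - X : Polynomial Ω).roots.toFinset).card = N := by
  have hsep : (X ^ N - X : Polynomial Ω).Separable := galois_poly_separable p N h
  have hnd : (X ^ N - X : Polynomial Ω).roots.Nodup := Polynomial.nodup_roots hsep
  have hs : Multiset.card (X ^ N - X : Polynomial Ω).roots
      = (X ^ N - X : Polynomial Ω).natDegree :=
    Polynomial.splits_iff_card_roots.mp
      (IsAlgClosed.splits (X ^ N - X : Polynomial Ω))
  rw [Multiset.toFinset_card_of_nodup hnd, hs, aux_natDegree_XpowN_sub_X hN]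

set_option maxHeartbeats 1000000 in
theorem stmt_10 (q n t k : ℕ) (hq3 : 3 ≤ q)
    (hq : ∃ p e : ℕ, p.Prime ∧ 0 < e ∧ q = p ^ e)
    (ht : 0 < t) (h2tk : 2 * t < k) (hn : k + t + 1 ≤ n)
    (F0 : Type) [Field F0] [Fintype F0] (hF0 : Fintype.card F0 = q)
    (δ Cc : AlgebraicClosure F0) (c : ℕ → AlgebraicClosure F0)
    (hδK : δ ^ q ^ n = δ) (hCcK : Cc ^ q ^ n = Cc) (hcK : ∀ i, c i ^ q ^ n = c i)
    (hδ : δ ≠ 0) (hCc : Cc ≠ 0) :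
    ∃ l : AlgebraicClosure F0,
      l ^ q ^ n = l ∧ l ^ q ≠ l ∧
      Fval q t δ l ≠ 0 ∧ Gval q t k c Cc l ≠ 0 ∧
      ∀ ξ : AlgebraicClosure F0, ξ ^ q ^ (k - 2 * t) = ξ → ξ ^ q ^ (k - t) ≠ ξ →
        (ξ - ξ ^ q ^ t) ^ q ^ (k + t) * (ξ ^ q ^ (k - t) - ξ) ^ q ^ t
            * Fval q t δ l ^ (q ^ t + 1)
          + δ * (ξ ^ q ^ k - ξ) ^ (q ^ t * (q ^ t + 1)) * l ^ (q ^ t * (q ^ t + 1)) ≠ 0 := by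
  classical
  obtain ⟨p, e, hp, he, hqe⟩ := hq
  haveI : Fact p.Prime := ⟨hp⟩
  -- char of F0 is p
  haveI : CharP F0 (ringChar F0) := ringChar.charP F0
  obtain ⟨m, hrprime, hcard⟩ := FiniteField.card F0 (ringChar F0)
  have hpr : p = ringChar F0 := by
    have hdvd : p ∣ (ringChar F0) ^ (m : ℕ) := by
      rw [← hcard, hF0, hqe]; exact dvd_pow_self p (by omega)
    have := hp.dvd_of_dvd_pow hdvd
    exact ((Nat.prime_dvd_prime_iff_eq hp hrprime).mp this)
  haveI hcharF0 : CharP F0 p := by rw [hpr]; infer_instance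
  haveI : CharP (AlgebraicClosure F0) p := charP_of_injective_algebraMap (algebraMap F0 (AlgebraicClosure F0)).injective p
  have hq1 : 1 < q := by omega
  have hpq : ∀ N : ℕ, 0 < N → p ∣ q ^ N := by
    intro N hN
    rw [hqe, ← pow_mul]
    exact dvd_pow_self p (by positivity)
  have hqpow1 : ∀ N : ℕ, 0 < N → 1 < q ^ N := fun N hN => Nat.one_lt_pow (by omega) hq1
  -- the polynomials
  set e1 : ℕ := q ^ t + 1 with he1
  set D : ℕ := q ^ (2 * t) * e1 with hD
  set d' : ℕ := q ^ t * e1 with hd'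
  set Fp : Polynomial (AlgebraicClosure F0) := X + C δ * X ^ (q ^ (2 * t)) with hFp
  set Gp : Polynomial (AlgebraicClosure F0) := X ^ (q ^ (2 * t))
      + (∑ i ∈ Finset.Ico (2 * t + 1) k, C (c i) * X ^ (q ^ i)) + C Cc * X ^ (q ^ k) with hGp
  set A : (AlgebraicClosure F0) → (AlgebraicClosure F0) := fun ξ => (ξ - ξ ^ q ^ t) ^ q ^ (k + t) * (ξ ^ q ^ (k - t) - ξ) ^ q ^ t
    with hA
  set B : (AlgebraicClosure F0) → (AlgebraicClosure F0) := fun ξ => δ * (ξ ^ q ^ k - ξ) ^ (q ^ t * (q ^ t + 1)) with hB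
  set Lp : (AlgebraicClosure F0) → Polynomial (AlgebraicClosure F0) := fun ξ => C (A ξ) * Fp ^ e1 + C (B ξ) * X ^ d' with hLp
  set Sxi : Finset (AlgebraicClosure F0) :=
    ((X ^ (q ^ (k - 2 * t)) - X : Polynomial (AlgebraicClosure F0)).roots.toFinset).filter
      (fun ξ => ξ ^ q ^ (k - t) ≠ ξ) with hSxi
  set P : Polynomial (AlgebraicClosure F0) := (X ^ q - X) * Fp * Gp * ∏ ξ ∈ Sxi, Lp ξ with hP
  have h2t1 : 1 < q ^ (2 * t) := hqpow1 _ (by omega)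
  -- Fp facts
  have hCX : (C δ * X ^ (q ^ (2 * t)) : Polynomial (AlgebraicClosure F0)).natDegree = q ^ (2 * t) :=
    Polynomial.natDegree_C_mul_X_pow _ δ hδ
  have hFpdeg : Fp.natDegree = q ^ (2 * t) := by
    rw [hFp, Polynomial.natDegree_add_eq_right_of_natDegree_lt]
    · exact hCX
    · rw [hCX, Polynomial.natDegree_X]; exact h2t1
  have hFplead : Fp.leadingCoeff = δ := by
    rw [Polynomial.leadingCoeff, hFpdeg, hFp]
    simp [Polynomial.coeff_X, Polynomial.coeff_X_pow, h2t1.ne, h2t1.ne']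
  have hFpne : Fp ≠ 0 := by
    intro h; rw [h] at hFplead; simp at hFplead; exact hδ hFplead.symm
  have hδe1 : δ ^ e1 ≠ 0 := pow_ne_zero _ hδ
  have hlcne : Fp.leadingCoeff ^ e1 ≠ 0 := by rw [hFplead]; exact hδe1
  have hFpedeg : (Fp ^ e1).natDegree = D := by
    rw [Polynomial.natDegree_pow' hlcne, hFpdeg, hD, mul_comm]
  have hFpecoeff : (Fp ^ e1).coeff D = δ ^ e1 := by
    rw [← hFpedeg, Polynomial.coeff_natDegree, Polynomial.leadingCoeff_pow' hlcne, hFplead]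
  have hd'D : d' < D := by
    rw [hd', hD]
    have h6 : q ^ t < q ^ (2 * t) := Nat.pow_lt_pow_right hq1 (by omega)
    have he1pos : 0 < e1 := by positivity
    nlinarith
  -- Lp facts
  have hLpcoeff : ∀ ξ, (Lp ξ).coeff D = A ξ * δ ^ e1 := by
    intro ξ
    rw [hLp]
    simp [Polynomial.coeff_add, Polynomial.coeff_C_mul, hFpecoeff,
      Polynomial.coeff_X_pow, hd'D.ne, hd'D.ne']
  have hLpdeg : ∀ ξ, (Lp ξ).natDegree ≤ D := by
    intro ξ
    apply le_trans (Polynomial.natDegree_add_le _ _)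
    apply max_le
    · exact le_trans (Polynomial.natDegree_C_mul_le _ _) (le_of_eq hFpedeg)
    · exact le_trans (Polynomial.natDegree_C_mul_le _ _)
        (by rw [Polynomial.natDegree_X_pow]; omega)
  have hk2t : 1 < q ^ (k - 2 * t) := hqpow1 _ (by omega)
  have hAne : ∀ ξ ∈ Sxi, A ξ ≠ 0 := by
    intro ξ hξ
    rw [hSxi, Finset.mem_filter, aux_mem_rootset hk2t] at hξ
    obtain ⟨hfix, hnfix⟩ := hξ
    apply mul_ne_zero
    · apply pow_ne_zero
      rw [sub_ne_zero]
      intro hh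
      apply hnfix
      have h7 : ξ ^ q ^ (k - t) = (ξ ^ q ^ (k - 2 * t)) ^ q ^ t := by
        rw [← pow_mul, ← pow_add, show k - 2 * t + t = k - t by omega]
      rw [h7, hfix, ← hh]
    · apply pow_ne_zero
      rw [sub_ne_zero]
      exact hnfix
  have hLpne : ∀ ξ ∈ Sxi, Lp ξ ≠ 0 := by
    intro ξ hξ h0
    have h8 := hLpcoeff ξ
    rw [h0] at h8
    simp only [Polynomial.coeff_zero] at h8
    exact (mul_ne_zero (hAne ξ hξ) hδe1) h8.symm
  -- Gp facts
  have hGpcoeff : Gp.coeff (q ^ k) = Cc := by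
    have h1 : q ^ (2 * t) ≠ q ^ k := Nat.ne_of_lt (Nat.pow_lt_pow_right hq1 h2tk)
    rw [hGp]
    rw [Polynomial.coeff_add, Polynomial.coeff_add, Polynomial.coeff_X_pow,
      Polynomial.finset_sum_coeff]
    have hsum : ∀ i ∈ Finset.Ico (2 * t + 1) k,
        (C (c i) * X ^ (q ^ i)).coeff (q ^ k) = 0 := by
      intro i hi
      rw [Finset.mem_Ico] at hi
      have h9 : q ^ i ≠ q ^ k := Nat.ne_of_lt (Nat.pow_lt_pow_right hq1 hi.2)
      simp [Polynomial.coeff_C_mul, Polynomial.coeff_X_pow, h9, h9.symm]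
    rw [Finset.sum_congr rfl hsum]
    simp [Polynomial.coeff_C_mul, Polynomial.coeff_X_pow, h1, h1.symm]
  have hGpne : Gp ≠ 0 := by
    intro h0; rw [h0] at hGpcoeff; simp at hGpcoeff; exact hCc hGpcoeff.symm
  have hGpdeg : Gp.natDegree ≤ q ^ k := by
    rw [hGp]
    apply le_trans (Polynomial.natDegree_add_le _ _)
    apply max_le
    · apply le_trans (Polynomial.natDegree_add_le _ _)
      apply max_le
      · rw [Polynomial.natDegree_X_pow]
        exact Nat.le_of_lt (Nat.pow_lt_pow_right hq1 h2tk)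
      · apply Polynomial.natDegree_sum_le_of_forall_le
        intro i hi
        rw [Finset.mem_Ico] at hi
        apply le_trans (Polynomial.natDegree_C_mul_le _ _)
        rw [Polynomial.natDegree_X_pow]
        exact Nat.le_of_lt (Nat.pow_lt_pow_right hq1 hi.2)
    · apply le_trans (Polynomial.natDegree_C_mul_le _ _)
      rw [Polynomial.natDegree_X_pow]
  -- X^q - X facts
  have hXqne : (X ^ q - X : Polynomial (AlgebraicClosure F0)) ≠ 0 := aux_XpowN_sub_X_ne_zero hq1
  have hXqdeg : (X ^ q - X : Polynomial (AlgebraicClosure F0)).natDegree = q := aux_natDegree_XpowN_sub_X hq1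
  -- Sxi card bound
  have hSxicard : Sxi.card ≤ q ^ (k - 2 * t) := by
    calc Sxi.card ≤ ((X ^ (q ^ (k - 2 * t)) - X : Polynomial (AlgebraicClosure F0)).roots.toFinset).card :=
          Finset.card_filter_le _ _
      _ ≤ Multiset.card (X ^ (q ^ (k - 2 * t)) - X : Polynomial (AlgebraicClosure F0)).roots :=
          Multiset.toFinset_card_le _
      _ ≤ (X ^ (q ^ (k - 2 * t)) - X : Polynomial (AlgebraicClosure F0)).natDegree := Polynomial.card_roots' _
      _ = q ^ (k - 2 * t) := aux_natDegree_XpowN_sub_X hk2t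
  -- P nonzero
  have hProdne : (∏ ξ ∈ Sxi, Lp ξ) ≠ 0 := Finset.prod_ne_zero_iff.mpr hLpne
  have hPne : P ≠ 0 := by
    rw [hP]
    exact mul_ne_zero (mul_ne_zero (mul_ne_zero hXqne hFpne) hGpne) hProdne
  -- P degree bound
  have hPdeg : P.natDegree ≤ q + q ^ (2 * t) + q ^ k + q ^ (k - 2 * t) * D := by
    rw [hP]
    apply le_trans (Polynomial.natDegree_mul_le)
    have h1 : ((X ^ q - X : Polynomial (AlgebraicClosure F0)) * Fp * Gp).natDegree ≤ q + q ^ (2 * t) + q ^ k := by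
      apply le_trans (Polynomial.natDegree_mul_le)
      have h2 : ((X ^ q - X : Polynomial (AlgebraicClosure F0)) * Fp).natDegree ≤ q + q ^ (2 * t) := by
        apply le_trans (Polynomial.natDegree_mul_le)
        rw [hXqdeg, hFpdeg]
      omega
    have h3 : (∏ ξ ∈ Sxi, Lp ξ).natDegree ≤ q ^ (k - 2 * t) * D := by
      apply le_trans (Polynomial.natDegree_prod_le _ _)
      calc (∑ ξ ∈ Sxi, (Lp ξ).natDegree) ≤ ∑ _ξ ∈ Sxi, D :=
            Finset.sum_le_sum fun ξ _ => hLpdeg ξ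
        _ = Sxi.card * D := by rw [Finset.sum_const, smul_eq_mul]
        _ ≤ q ^ (k - 2 * t) * D := Nat.mul_le_mul_right D hSxicard
    omega
  -- numeric bound
  have hnum : q + q ^ (2 * t) + q ^ k + q ^ (k - 2 * t) * D < q ^ n := by
    have hk' : k - 2 * t + 2 * t = k := by omega
    have hDeq : q ^ (k - 2 * t) * D = q ^ (k + t) + q ^ k := by
      calc q ^ (k - 2 * t) * D = q ^ (k - 2 * t) * (q ^ (2 * t) * (q ^ t + 1)) := by
            rw [hD, he1]
        _ = (q ^ (k - 2 * t) * q ^ (2 * t)) * q ^ t + q ^ (k - 2 * t) * q ^ (2 * t) := by ring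
        _ = q ^ k * q ^ t + q ^ k := by rw [← pow_add, hk']
        _ = q ^ (k + t) + q ^ k := by rw [← pow_add]
    rw [hDeq]
    have h1 : q ≤ q ^ k := Nat.le_self_pow (by omega) q
    have h2 : q ^ (2 * t) < q ^ k := Nat.pow_lt_pow_right hq1 h2tk
    have h11 : 2 ≤ q ^ t := le_trans (by omega) (Nat.le_self_pow (by omega) q)
    have h3 : 2 * q ^ k ≤ q ^ (k + t) := by
      calc 2 * q ^ k ≤ q ^ t * q ^ k := Nat.mul_le_mul_right _ h11
        _ = q ^ (t + k) := (pow_add q t k).symm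
        _ = q ^ (k + t) := by rw [Nat.add_comm]
    have h4 : 3 * q ^ (k + t) ≤ q ^ n := by
      calc 3 * q ^ (k + t) ≤ q * q ^ (k + t) := Nat.mul_le_mul_right _ hq3
        _ = q ^ (k + t + 1) := by rw [pow_succ]; ring
        _ ≤ q ^ n := Nat.pow_le_pow_right (by omega) hn
    have h5 : 0 < q ^ (k + t) := Nat.pow_pos (by omega)
    omega
  -- the big field set
  have hqn1 : 1 < q ^ n := hqpow1 _ (by omega)
  set Sn : Finset (AlgebraicClosure F0) := (X ^ (q ^ n) - X : Polynomial (AlgebraicClosure F0)).roots.toFinset with hSn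
  have hSncard : Sn.card = q ^ n := aux_card_rootset p hqn1 (hpq n (by omega))
  -- find l
  have hbadcard : (P.roots.toFinset).card < Sn.card := by
    rw [hSncard]
    calc (P.roots.toFinset).card ≤ Multiset.card P.roots := Multiset.toFinset_card_le _
      _ ≤ P.natDegree := Polynomial.card_roots' _
      _ ≤ q + q ^ (2 * t) + q ^ k + q ^ (k - 2 * t) * D := hPdeg
      _ < q ^ n := hnum
  have hnsub : ¬ (Sn ⊆ P.roots.toFinset) := by
    intro hsub
    exact absurd (Finset.card_le_card hsub) (not_le.mpr hbadcard)
  obtain ⟨l, hlS, hlbad⟩ := Finset.not_subset.mp hnsub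
  have hlK : l ^ q ^ n = l := (aux_mem_rootset hqn1 l).mp hlS
  have hlP : Polynomial.eval l P ≠ 0 := by
    intro h0
    exact hlbad (Multiset.mem_toFinset.mpr ((Polynomial.mem_roots hPne).mpr h0))
  rw [hP] at hlP
  simp only [Polynomial.eval_mul] at hlP
  have h1 : Polynomial.eval l (X ^ q - X : Polynomial (AlgebraicClosure F0)) ≠ 0 := by
    intro h; apply hlP; rw [h]; ring
  have h2 : Polynomial.eval l Fp ≠ 0 := by
    intro h; apply hlP; rw [h]; ring
  have h3 : Polynomial.eval l Gp ≠ 0 := by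
    intro h; apply hlP; rw [h]; ring
  have h4 : Polynomial.eval l (∏ ξ ∈ Sxi, Lp ξ) ≠ 0 := by
    intro h; apply hlP; rw [h]; ring
  have hFv : Polynomial.eval l Fp = Fval q t δ l := by
    rw [hFp]; simp [Fval]
  refine ⟨l, hlK, ?_, ?_, ?_, ?_⟩
  · intro h
    apply h1
    simp [h, sub_self]
  · rwa [hFv] at h2
  · have hGv : Polynomial.eval l Gp = Gval q t k c Cc l := by
      rw [hGp]; simp [Gval, Polynomial.eval_finset_sum]
    rwa [hGv] at h3
  · intro ξ hfix hnfix
    have hmem : ξ ∈ Sxi := by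
      rw [hSxi, Finset.mem_filter, aux_mem_rootset hk2t]
      exact ⟨hfix, hnfix⟩
    rw [Polynomial.eval_prod] at h4
    have h5 : Polynomial.eval l (Lp ξ) ≠ 0 := by
      intro h0
      apply h4
      exact Finset.prod_eq_zero hmem h0
    rw [hLp] at h5
    simp only [Polynomial.eval_add, Polynomial.eval_mul, Polynomial.eval_C,
      Polynomial.eval_pow, Polynomial.eval_X] at h5
    rw [hFv] at h5
    rw [hA, hB] at h5
    simp only at h5
    intro hcontra
    rw [hd', he1] at hcontra h5
    exact h5 hcontra
end
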